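/- Let k ≥ 1 and w : Fin n → ℕ with 1 ≤ w i ≤ k for all i. Let I_k ⊆ MvPolynomial (Fin n) ℝ be the ideal generated by all w-weighted-homogeneous polynomials of weighted degree > k, let A = MvPolynomial (Fin n) ℝ / I_k with the induced grading (the degree-i component being the image of the w-weighted-homogeneous polynomials of weighted degree i), and let 𝔸^{[k]} = ℝ[ε]/⟨ε^{k+1}⟩ with the grading in which the class of ε^i has degree i. Call an ℝ-algebra homomorphism A → 𝔸^{[k]} graded if it maps the degree-i component of A into the span of the class of ε^i for each i. Then the map from (Fin n → ℝ) to the set of graded ℝ-algebra homomorphisms A → 𝔸^{[k]}, sending λ to the homomorphism determined by (class of x_i) ↦ λ i • (class of ε^(w i)), is a bijection. -/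

import Mathlib

open MvPolynomial

/-- The ideal `I_k` of `ℝ[x₁,…,xₙ]` generated by all `w`-weighted-homogeneous
polynomials of weighted degree `> k`. -/
noncomputable def weightIdeal (n k : ℕ) (w : Fin n → ℕ) : Ideal (MvPolynomial (Fin n) ℝ) :=
  Ideal.span {P : MvPolynomial (Fin n) ℝ | ∃ i : ℕ, k < i ∧ P.IsWeightedHomogeneous w i}

/-- The ideal `⟨ε^(k+1)⟩` of `ℝ[ε]`. -/
noncomputable def epsIdeal (k : ℕ) : Ideal (Polynomial ℝ) :=
  Ideal.span {(Polynomial.X : Polynomial ℝ) ^ (k + 1)}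

lemma eps_pow_eq_zero {k i : ℕ} (h : k < i) :
    Ideal.Quotient.mk (epsIdeal k) (Polynomial.X ^ i) = 0 := by
  rw [Ideal.Quotient.eq_zero_iff_mem, epsIdeal, Ideal.mem_span_singleton]
  exact pow_dvd_pow _ h

lemma smul_eps_pow_eq_zero {k d : ℕ} (hd : d ≤ k) {c : ℝ}
    (h : c • Ideal.Quotient.mk (epsIdeal k) (Polynomial.X ^ d) = 0) : c = 0 := by
  by_contra hc
  rw [← Ideal.Quotient.mkₐ_eq_mk ℝ, ← map_smul, Ideal.Quotient.mkₐ_eq_mk,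
    Ideal.Quotient.eq_zero_iff_mem, epsIdeal, Ideal.mem_span_singleton,
    Polynomial.smul_eq_C_mul] at h
  have hne : (Polynomial.C c * Polynomial.X ^ d : Polynomial ℝ) ≠ 0 :=
    mul_ne_zero (by simpa using hc) (pow_ne_zero _ Polynomial.X_ne_zero)
  have := Polynomial.natDegree_le_of_dvd h hne
  rw [Polynomial.natDegree_C_mul hc, Polynomial.natDegree_X_pow,
    Polynomial.natDegree_X_pow] at this
  omega

lemma my_prod_smul {ι α β : Type*} [CommMonoid β] [CommMonoid α] [MulAction α β]
    [IsScalarTower α β β] [SMulCommClass α β β]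
    (s : Finset ι) (b : ι → α) (f : ι → β) :
    ∏ i ∈ s, b i • f i = (∏ i ∈ s, b i) • ∏ i ∈ s, f i := by
  induction s using Finset.cons_induction_on with
  | empty => simp
  | @cons a s hj ih => rw [Finset.prod_cons, Finset.prod_cons, Finset.prod_cons, ih, smul_mul_smul_comm]

lemma aeval_weighted {n k : ℕ} {w : Fin n → ℕ} (lam : Fin n → ℝ)
    {P : MvPolynomial (Fin n) ℝ} {d : ℕ} (hP : P.IsWeightedHomogeneous w d) :
    ∃ c : ℝ, aeval (fun i => lam i • Ideal.Quotient.mk (epsIdeal k) (Polynomial.X ^ (w i))) P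
      = c • Ideal.Quotient.mk (epsIdeal k) (Polynomial.X ^ d) := by
  set f : Fin n → Polynomial ℝ ⧸ epsIdeal k :=
    fun i => lam i • Ideal.Quotient.mk (epsIdeal k) (Polynomial.X ^ (w i)) with hf
  have key : ∀ m ∈ P.support,
      aeval f (monomial m (coeff m P)) =
        (coeff m P * ∏ i ∈ m.support, lam i ^ m i) •
          Ideal.Quotient.mk (epsIdeal k) (Polynomial.X ^ d) := by
    intro m hm
    have hdeg : (Finsupp.weight w) m = d := hP (mem_support_iff.mp hm)
    rw [aeval_monomial]
    have h1 : (m.prod fun i e => f i ^ e) =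
        (∏ i ∈ m.support, lam i ^ m i) •
          Ideal.Quotient.mk (epsIdeal k) (Polynomial.X ^ d) := by
    
      have h2 : ∀ i ∈ m.support, f i ^ m i =
          (lam i ^ m i) • Ideal.Quotient.mk (epsIdeal k) (Polynomial.X ^ (m i * w i)) := by
        intro i _
        rw [hf, smul_pow, ← map_pow, ← pow_mul, mul_comm (w i)]
      rw [Finsupp.prod, Finset.prod_congr rfl h2, my_prod_smul]
      congr 1
      rw [← map_prod]
      congr 1
      rw [Finset.prod_pow_eq_pow_sum]
      have h3 : ∑ i ∈ m.support, m i * w i = d := by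
        rw [← hdeg, Finsupp.weight_apply, Finsupp.sum]
        exact Finset.sum_congr rfl fun i _ => by rw [smul_eq_mul]
      rw [h3]
    rw [h1, ← Algebra.smul_def, smul_smul]
  refine ⟨∑ m ∈ P.support, coeff m P * ∏ i ∈ m.support, lam i ^ m i, ?_⟩
  conv_lhs => rw [P.as_sum]
  rw [map_sum, Finset.sum_congr rfl key, ← Finset.sum_smul]

/-- Graded algebra homomorphisms `𝒜^{[k]}(ℝ^𝕕) = ℝ[x]/I_k → 𝔸^{[k]} = ℝ[ε]/⟨ε^{k+1}⟩`
(those sending the class of a `w`-weighted-homogeneous polynomial of weighted degree `i`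
to a scalar multiple of the class of `ε^i`) are in bijection with `ℝⁿ`:
`λ` corresponds to the unique homomorphism with `[xᵢ] ↦ λ i • [ε^(w i)]`. -/
theorem stmt_3 (n k : ℕ) (hk : 1 ≤ k) (w : Fin n → ℕ)
    (hw : ∀ i, 1 ≤ w i ∧ w i ≤ k) :
    (∀ lam : Fin n → ℝ,
      ∃! ψ : (MvPolynomial (Fin n) ℝ ⧸ weightIdeal n k w) →ₐ[ℝ]
               (Polynomial ℝ ⧸ epsIdeal k),
        (∀ i : ℕ, ∀ P : MvPolynomial (Fin n) ℝ, P.IsWeightedHomogeneous w i →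
          ∃ c : ℝ, ψ (Ideal.Quotient.mk (weightIdeal n k w) P) =
            c • Ideal.Quotient.mk (epsIdeal k) (Polynomial.X ^ i)) ∧
        (∀ i : Fin n, ψ (Ideal.Quotient.mk (weightIdeal n k w) (X i)) =
          lam i • Ideal.Quotient.mk (epsIdeal k) (Polynomial.X ^ (w i)))) ∧
    (∀ ψ : (MvPolynomial (Fin n) ℝ ⧸ weightIdeal n k w) →ₐ[ℝ]
             (Polynomial ℝ ⧸ epsIdeal k),
      (∀ i : ℕ, ∀ P : MvPolynomial (Fin n) ℝ, P.IsWeightedHomogeneous w i →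
        ∃ c : ℝ, ψ (Ideal.Quotient.mk (weightIdeal n k w) P) =
          c • Ideal.Quotient.mk (epsIdeal k) (Polynomial.X ^ i)) →
      ∃! lam : Fin n → ℝ,
        ∀ i : Fin n, ψ (Ideal.Quotient.mk (weightIdeal n k w) (X i)) =
          lam i • Ideal.Quotient.mk (epsIdeal k) (Polynomial.X ^ (w i))) := by
  constructor
  · intro lam
    set f : Fin n → Polynomial ℝ ⧸ epsIdeal k :=
      fun i => lam i • Ideal.Quotient.mk (epsIdeal k) (Polynomial.X ^ (w i)) with hf
    have hker : ∀ P ∈ weightIdeal n k w, aeval f P = 0 := by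
      have hle : weightIdeal n k w ≤
          RingHom.ker (aeval f : MvPolynomial (Fin n) ℝ →ₐ[ℝ] Polynomial ℝ ⧸ epsIdeal k) := by
        rw [weightIdeal, Ideal.span_le]
        rintro Q ⟨i, hi, hQ⟩
        obtain ⟨c, hc⟩ := aeval_weighted lam hQ
        rw [SetLike.mem_coe, RingHom.mem_ker, hc, eps_pow_eq_zero hi, smul_zero]
      exact fun P hP => hle hP
    set ψ₀ : (MvPolynomial (Fin n) ℝ ⧸ weightIdeal n k w) →ₐ[ℝ] Polynomial ℝ ⧸ epsIdeal k :=
      Ideal.Quotient.liftₐ _ (aeval f) hker with hψ₀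
    have happ : ∀ P : MvPolynomial (Fin n) ℝ,
        ψ₀ (Ideal.Quotient.mk (weightIdeal n k w) P) = aeval f P := by
      intro P
      rw [hψ₀, Ideal.Quotient.liftₐ_apply]
      rfl
    refine ⟨ψ₀, ⟨?_, ?_⟩, ?_⟩
    · intro i P hPi
      obtain ⟨c, hc⟩ := aeval_weighted lam hPi
      exact ⟨c, by rw [happ, hc]⟩
    · intro i
      rw [happ, aeval_X]
    · rintro ψ' ⟨-, h2⟩
      apply Ideal.Quotient.algHom_ext
      apply MvPolynomial.algHom_ext
      intro i
      simp only [AlgHom.comp_apply, Ideal.Quotient.mkₐ_eq_mk]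
      rw [h2 i, happ, aeval_X]
  · intro ψ hgr
    choose c hc using fun i : Fin n => hgr (w i) (X i) (isWeightedHomogeneous_X ℝ w i)
    refine ⟨c, fun i => hc i, ?_⟩
    intro lam' hl'
    funext i
    have heq : lam' i • Ideal.Quotient.mk (epsIdeal k) (Polynomial.X ^ (w i)) =
        c i • Ideal.Quotient.mk (epsIdeal k) (Polynomial.X ^ (w i)) := (hl' i).symm.trans (hc i)
    have h0 : (lam' i - c i) • Ideal.Quotient.mk (epsIdeal k) (Polynomial.X ^ (w i)) = 0 := by
      rw [sub_smul, heq, sub_self]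
    have := smul_eps_pow_eq_zero (hw i).2 h0
    linarith
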